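/- (Corollary 1, estimate; case f = 0.) Set h̃_τ := [‖u(0)‖ + ∫_0^τ α(ξ)·ν(ξ)·‖u(ξ−τ)‖^p dξ]/ν(τ) and assume h̃_τ > 0. Assume the improper integral I := ∫_τ^∞ α(ξ)·σ(ξ)^p·ν(ξ)^{1−p} dξ converges and (h̃_τ·ν(τ))^{1−p} > (p−1)·I. Then for all t ≥ τ, ‖u(t)‖ ≤ (1/ν(t))·( (h̃_τ·ν(τ))^{1−p} − (p−1)·∫_τ^t α(ξ)·σ(ξ)^p·ν(ξ)^{1−p} dξ )^{−1/(p−1)}. -/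

import Mathlib

open Real MeasureTheory Set Filter Topology ComplexInnerProductSpace

/-- `ν(t) = exp(−∫₀ᵗ γ(ξ) dξ)`. -/
noncomputable def nu (γ : ℝ → ℝ) (t : ℝ) : ℝ := Real.exp (-∫ ξ in (0:ℝ)..t, γ ξ)

/-- `σ(t) = exp(−∫_{t−τ}^t γ(ξ) dξ)`. -/
noncomputable def sig (γ : ℝ → ℝ) (τ t : ℝ) : ℝ :=
  Real.exp (-∫ ξ in (t - τ)..t, γ ξ)

lemma nu_pos (γ : ℝ → ℝ) (t : ℝ) : 0 < nu γ t := Real.exp_pos _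
lemma sig_pos (γ : ℝ → ℝ) (τ t : ℝ) : 0 < sig γ τ t := Real.exp_pos _
lemma nu_zero (γ : ℝ → ℝ) : nu γ 0 = 1 := by simp [nu]

lemma hasDerivAt_nu {γ : ℝ → ℝ} (hγc : Continuous γ) (t : ℝ) :
    HasDerivAt (nu γ) (-γ t * nu γ t) t := by
  have hG : HasDerivAt (fun s => ∫ ξ in (0:ℝ)..s, γ ξ) (γ t) t :=
    intervalIntegral.integral_hasDerivAt_right (hγc.intervalIntegrable _ _)
      hγc.aestronglyMeasurable.stronglyMeasurableAtFilter hγc.continuousAt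
  have := hG.neg.exp
  show HasDerivAt (fun s => nu γ s) _ t
  simpa [nu, mul_comm] using this

lemma continuous_nu {γ : ℝ → ℝ} (hγc : Continuous γ) : Continuous (nu γ) :=
  continuous_iff_continuousAt.2 fun t => (hasDerivAt_nu hγc t).continuousAt

lemma nu_mul_sig {γ : ℝ → ℝ} (hγc : Continuous γ) (τ t : ℝ) :
    nu γ (t - τ) * sig γ τ t = nu γ t := by
  unfold nu sig
  rw [← Real.exp_add]
  congr 1
  have := intervalIntegral.integral_add_adjacent_intervals (μ := volume)
    (hγc.intervalIntegrable 0 (t - τ)) (hγc.intervalIntegrable (t - τ) t)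
  linarith

lemma continuous_sig {γ : ℝ → ℝ} (hγc : Continuous γ) (τ : ℝ) :
    Continuous (sig γ τ) := by
  have : sig γ τ = fun t => nu γ t / nu γ (t - τ) := by
    funext t
    rw [eq_div_iff (nu_pos γ (t - τ)).ne', mul_comm, nu_mul_sig hγc]
  rw [this]
  exact (continuous_nu hγc).div ((continuous_nu hγc).comp (by continuity))
    fun t => (nu_pos γ _).ne'

/-- Corollary 2.8 (Corollary 1), the estimate (64) for the case `f = 0`. -/
theorem stmt_15
    {H : Type*} [NormedAddCommGroup H] [InnerProductSpace ℂ H]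
    (τ p : ℝ) (hτ : 0 < τ) (hp : 1 < p)
    (γ α : ℝ → ℝ)
    (hγc : Continuous γ) (hαc : Continuous α)
    (hα : ∀ t, 0 ≤ α t)
    (u : ℝ → H) (u' : ℝ → H)
    (huc : ContinuousOn u (Ici (-τ)))
    (hud : ∀ t, 0 ≤ t → HasDerivWithinAt u (u' t) (Ici (0:ℝ)) t)
    (hnd : ∀ t, 0 ≤ t → DifferentiableWithinAt ℝ (fun s => ‖u s‖) (Ici (0:ℝ)) t)
    (huineq : ∀ t, 0 ≤ t → (⟪u t, u' t⟫).re ≤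
      γ t * ‖u t‖ ^ 2 + α t * ‖u t‖ * ‖u (t - τ)‖ ^ p)
    (h h' : ℝ → ℝ)
    (hh0 : ∀ t, -τ ≤ t → 0 ≤ h t)
    (hhc : ContinuousOn h (Ici (-τ)))
    (hhd : ∀ t, 0 ≤ t → HasDerivWithinAt h (h' t) (Ici (0:ℝ)) t)
    (hheq : ∀ t, 0 ≤ t → h' t = γ t * h t + α t * h (t - τ) ^ p)
    (hinit : ∀ t, -τ ≤ t → t ≤ 0 → h t = ‖u t‖)
    (hτv : ℝ)
    (hτvdef : hτv = (‖u 0‖ + ∫ ξ in (0:ℝ)..τ,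
        α ξ * nu γ ξ * ‖u (ξ - τ)‖ ^ p) / nu γ τ)
    (hτvpos : 0 < hτv)
    (I : ℝ)
    (hint : IntegrableOn (fun ξ => α ξ * sig γ τ ξ ^ p * nu γ ξ ^ (1 - p)) (Ici τ))
    (hI : I = ∫ ξ in Ici τ, α ξ * sig γ τ ξ ^ p * nu γ ξ ^ (1 - p))
    (hcond : (p - 1) * I < (hτv * nu γ τ) ^ (1 - p)) :
    ∀ t, τ ≤ t →
      ‖u t‖ ≤ (1 / nu γ t) * ((hτv * nu γ τ) ^ (1 - p)
          - (p - 1) * ∫ ξ in τ..t, α ξ * sig γ τ ξ ^ p * nu γ ξ ^ (1 - p))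
            ^ (-(1 / (p - 1))) := by
  have hτ0 : (0:ℝ) ≤ τ := hτ.le
  have hp0 : (0:ℝ) ≤ p := by linarith
  set n : ℝ → ℝ := fun s => ‖u s‖ with hn
  set g : ℝ → ℝ := fun s => derivWithin n (Ici (0:ℝ)) s with hgdef
  have hgd : ∀ s, 0 ≤ s → HasDerivWithinAt n (g s) (Ici (0:ℝ)) s := fun s hs =>
    (hnd s hs).hasDerivWithinAt
  have hnnn : ∀ s, 0 ≤ n s := fun s => norm_nonneg _
  -- The product rule for the norm squared
  have hng : ∀ s, 0 ≤ s → n s * g s = (⟪u s, u' s⟫).re := by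
    intro s hs
    have h1 : HasDerivWithinAt (fun r => n r ^ 2) ((2:ℕ) * n s ^ (2-1) * g s) (Ici (0:ℝ)) s :=
      (hgd s hs).pow 2
    have h2' : HasDerivWithinAt (fun r => ⟪u r, u r⟫) (⟪u s, u' s⟫ + ⟪u' s, u s⟫) (Ici (0:ℝ)) s :=
      (hud s hs).inner ℂ (hud s hs)
    have h2 : HasDerivWithinAt (fun r => (⟪u r, u r⟫).re)
        ((⟪u s, u' s⟫ + ⟪u' s, u s⟫).re) (Ici (0:ℝ)) s := by
      have := Complex.reCLM.hasFDerivAt.comp_hasDerivWithinAt s h2'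
      simpa [Function.comp_def] using this
    have heqf : (fun r => (⟪u r, u r⟫).re) = fun r => n r ^ 2 := by
      funext r
      exact inner_self_eq_norm_sq (𝕜 := ℂ) (u r)
    rw [heqf] at h2
    have huniq := UniqueDiffWithinAt.eq_deriv _ ((uniqueDiffOn_Ici (0:ℝ)) s hs) h1 h2
    have hre : (⟪u s, u' s⟫ + ⟪u' s, u s⟫).re = 2 * (⟪u s, u' s⟫).re := by
      have hc : ⟪u' s, u s⟫ = starRingEnd ℂ ⟪u s, u' s⟫ := (inner_conj_symm _ _).symm
      rw [hc, Complex.add_re, Complex.conj_re]; ring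
    rw [hre] at huniq
    norm_num at huniq
    linarith
  -- Core differential inequality
  have core : ∀ x : ℝ, 0 < x → n (x - τ) ≤ h (x - τ) →
      g x ≤ γ x * n x + α x * h (x - τ) ^ p := by
    intro x hx hcmp
    have hx0 : (0:ℝ) ≤ x := hx.le
    have hmem : Ici (0:ℝ) ∈ 𝓝 x := Ici_mem_nhds hx
    have hda : HasDerivAt n (g x) x := (hgd x hx0).hasDerivAt hmem
    have hhnn : 0 ≤ h (x - τ) := hh0 _ (by linarith)
    have hhpnn : 0 ≤ h (x - τ) ^ p := Real.rpow_nonneg hhnn p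
    rcases eq_or_lt_of_le (hnnn x) with h0 | h0
    · -- ‖u x‖ = 0
      have hmin : IsLocalMin n x := Filter.Eventually.of_forall fun r => by
        rw [← h0]; exact hnnn r
      have hd0 : deriv n x = 0 := hmin.deriv_eq_zero
      rw [hda.deriv] at hd0
      rw [hd0, ← h0]
      have := mul_nonneg (hα x) hhpnn
      linarith
    · -- ‖u x‖ > 0
      have h1 := hng x hx0
      have h2 : (⟪u x, u' x⟫).re ≤ γ x * n x ^ 2 + α x * n x * n (x - τ) ^ p := huineq x hx0
      have h3 : n x * g x ≤ n x * (γ x * n x + α x * n (x - τ) ^ p) := by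
        rw [h1]
        calc (⟪u x, u' x⟫).re ≤ γ x * n x ^ 2 + α x * n x * n (x - τ) ^ p := h2
          _ = n x * (γ x * n x + α x * n (x - τ) ^ p) := by ring
      have h4 : g x ≤ γ x * n x + α x * n (x - τ) ^ p := le_of_mul_le_mul_left h3 h0
      have h5 : n (x - τ) ^ p ≤ h (x - τ) ^ p := Real.rpow_le_rpow (hnnn _) hcmp hp0
      have h6 := mul_le_mul_of_nonneg_left h5 (hα x)
      linarith
  -- Comparison with h, base case
  have comp0 : ∀ s, -τ ≤ s → s ≤ 0 → n s ≤ h s := fun s h1 h2 => (hinit s h1 h2).ge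
  -- Comparison by steps
  have compk : ∀ k : ℕ, ∀ s, -τ ≤ s → s ≤ (k : ℝ) * τ → n s ≤ h s := by
    intro k
    induction k with
    | zero =>
      intro s h1 h2
      exact comp0 s h1 (by simpa using h2)
    | succ k ih =>
      intro s h1 h2
      by_cases hc : s ≤ (k : ℝ) * τ
      · exact ih s h1 hc
      push_neg at hc
      have h2' : s ≤ (k : ℝ) * τ + τ := by push_cast at h2; linarith
      set a : ℝ := (k : ℝ) * τ with hadef
      set b : ℝ := (k : ℝ) * τ + τ with hbdef
      have ha0 : 0 ≤ a := by positivity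
      have hab : a ≤ b := by rw [hadef, hbdef]; linarith
      set e : ℝ → ℝ := fun r => nu γ r * (n r - h r) with hedef
      have hsub : Icc a b ⊆ Ici (-τ) := fun x hx => le_trans (by linarith) hx.1
      have hecont : ContinuousOn e (Icc a b) :=
        (continuous_nu hγc).continuousOn.mul
          (((huc.norm).mono hsub).sub (hhc.mono hsub))
      have hederiv : ∀ x ∈ Ioo a b, HasDerivAt e
          (-γ x * nu γ x * (n x - h x) + nu γ x * (g x - h' x)) x := by
        intro x hx
        have hx0 : 0 < x := lt_of_le_of_lt ha0 hx.1
        have hxI : Ici (0:ℝ) ∈ 𝓝 x := Ici_mem_nhds hx0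
        exact (hasDerivAt_nu hγc x).mul
          (((hgd x hx0.le).hasDerivAt hxI).sub ((hhd x hx0.le).hasDerivAt hxI))
      have hediff : ∀ x ∈ Ioo a b, deriv e x ≤ 0 := by
        intro x hx
        have hx0 : 0 < x := lt_of_le_of_lt ha0 hx.1
        have hcmp : n (x - τ) ≤ h (x - τ) := by
          by_cases hxτ : x - τ ≤ 0
          · exact comp0 _ (by linarith) hxτ
          · exact ih _ (by linarith) (by rw [hbdef] at hx; linarith [hx.2])
        have hineqx := core x hx0 hcmp
        rw [(hederiv x hx).deriv]
        have hhp := hheq x hx0.le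
        have hνp := nu_pos γ x
        have hkey : g x - h' x ≤ γ x * (n x - h x) := by rw [hhp]; linarith
        have := mul_le_mul_of_nonneg_left hkey hνp.le
        nlinarith [this]
      have hanti : AntitoneOn e (Icc a b) := by
        apply antitoneOn_of_deriv_nonpos (convex_Icc a b) hecont
        · intro x hx
          rw [interior_Icc] at hx
          exact (hederiv x hx).differentiableAt.differentiableWithinAt
        · intro x hx
          rw [interior_Icc] at hx
          exact hediff x hx
      have hmem1 : a ∈ Icc a b := ⟨le_refl a, hab⟩
      have hmem2 : s ∈ Icc a b := ⟨hc.le, by rw [hbdef]; linarith⟩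
      have hes := hanti hmem1 hmem2 hc.le
      have hna : n a ≤ h a := ih a (by linarith) (le_refl _)
      have hνa := nu_pos γ a
      have hνs := nu_pos γ s
      have hea : e a ≤ 0 := mul_nonpos_iff.2 (Or.inl ⟨hνa.le, by linarith⟩)
      have hes0 : nu γ s * (n s - h s) ≤ 0 := le_trans hes hea
      nlinarith [hes0]
  have comp : ∀ s, -τ ≤ s → n s ≤ h s := by
    intro s hs
    rcases le_total s 0 with hc | hc
    · exact comp0 s hs hc
    · refine compk ⌈s / τ⌉₊ s hs ?_
      rw [← div_le_iff₀ hτ]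
      exact Nat.le_ceil _
  -- Part 2: the function w = ν * h
  set w : ℝ → ℝ := fun s => nu γ s * h s with hwdef
  set W : ℝ → ℝ := fun s => α s * nu γ s * h (s - τ) ^ p with hWdef
  have hwd : ∀ s, 0 ≤ s → HasDerivWithinAt w (W s) (Ici (0:ℝ)) s := by
    intro s hs
    have hd := ((hasDerivAt_nu hγc s).hasDerivWithinAt).mul (hhd s hs)
    have heq : -γ s * nu γ s * h s + nu γ s * h' s = W s := by
      rw [hheq s hs, hWdef]; ring
    rwa [heq] at hd
  have hWnn : ∀ s, 0 ≤ s → 0 ≤ W s := by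
    intro s hs
    have h1 := Real.rpow_nonneg (hh0 (s - τ) (by linarith)) p
    exact mul_nonneg (mul_nonneg (hα s) (nu_pos γ s).le) h1
  have hhτc : ContinuousOn (fun s : ℝ => h (s - τ)) (Ici (0:ℝ)) := by
    apply hhc.comp ((continuous_id.sub continuous_const).continuousOn)
    intro x hx
    simp only [mem_Ici, id_eq, Pi.sub_apply] at hx ⊢
    linarith
  have hrpow_c : Continuous fun x : ℝ => x ^ p := Real.continuous_rpow_const hp0
  have hWcont : ContinuousOn W (Ici (0:ℝ)) := by
    apply ContinuousOn.mul
    · exact (hαc.continuousOn).mul (continuous_nu hγc).continuousOn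
    · exact hrpow_c.comp_continuousOn hhτc
  have hwcont : ContinuousOn w (Ici (0:ℝ)) :=
    (continuous_nu hγc).continuousOn.mul (hhc.mono (Ici_subset_Ici.2 (by linarith)))
  -- value of w at τ
  have hwτ : w τ = hτv * nu γ τ := by
    have hFTC : (∫ x in (0:ℝ)..τ, W x) = w τ - w 0 := by
      apply intervalIntegral.integral_eq_sub_of_hasDeriv_right_of_le hτ0
        (hwcont.mono Icc_subset_Ici_self)
      · intro x hx
        exact (((hwd x hx.1.le).hasDerivAt (Ici_mem_nhds hx.1)).hasDerivWithinAt)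
      · apply ContinuousOn.intervalIntegrable
        rw [uIcc_of_le hτ0]
        exact hWcont.mono Icc_subset_Ici_self
    have hw0 : w 0 = ‖u 0‖ := by
      rw [hwdef]
      simp [nu_zero, hinit 0 (by linarith) le_rfl]
    have hici : (∫ x in (0:ℝ)..τ, W x)
        = ∫ ξ in (0:ℝ)..τ, α ξ * nu γ ξ * ‖u (ξ - τ)‖ ^ p := by
      apply intervalIntegral.integral_congr
      intro x hx
      rw [uIcc_of_le hτ0] at hx
      have hxq := hinit (x - τ) (by linarith [hx.1]) (by linarith [hx.2])
      simp only [hWdef, hxq]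
    rw [hici] at hFTC
    rw [hτvdef, div_mul_cancel₀ _ (nu_pos γ τ).ne']
    linarith
  -- w is monotone on [0,∞)
  have hwmono : MonotoneOn w (Ici (0:ℝ)) := by
    apply monotoneOn_of_deriv_nonneg (convex_Ici 0) hwcont
    · intro x hx
      rw [interior_Ici] at hx
      exact ((hwd x hx.le).hasDerivAt (Ici_mem_nhds hx)).differentiableAt.differentiableWithinAt
    · intro x hx
      rw [interior_Ici] at hx
      rw [((hwd x hx.le).hasDerivAt (Ici_mem_nhds hx)).deriv]
      exact hWnn x hx.le
  have hwτpos : 0 < w τ := by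
    rw [hwτ]; exact mul_pos hτvpos (nu_pos γ τ)
  have hwpos : ∀ s, τ ≤ s → 0 < w s := fun s hs =>
    lt_of_lt_of_le hwτpos (hwmono (mem_Ici.2 hτ0) (mem_Ici.2 (by linarith)) hs)
  -- the key differential inequality for w
  set β : ℝ → ℝ := fun ξ => α ξ * sig γ τ ξ ^ p * nu γ ξ ^ (1 - p) with hβdef
  have hwkey : ∀ s, τ < s → W s ≤ β s * w s ^ p := by
    intro s hs
    have hs0 : 0 < s := lt_trans hτ hs
    have hsτ0 : (0:ℝ) ≤ s - τ := by linarith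
    have hν := nu_pos γ s
    have hνm := nu_pos γ (s - τ)
    have hσ := sig_pos γ τ s
    have hνppos : 0 < nu γ s ^ p := Real.rpow_pos_of_pos hν p
    have hwm : 0 ≤ w (s - τ) := mul_nonneg hνm.le (hh0 _ (by linarith))
    have hwle : w (s - τ) ≤ w s :=
      hwmono (mem_Ici.2 hsτ0) (mem_Ici.2 hs0.le) (by linarith)
    have hh' : h (s - τ) = w (s - τ) * sig γ τ s / nu γ s := by
      rw [hwdef, eq_div_iff hν.ne']
      rw [← nu_mul_sig hγc τ s]
      ring
    have hble : h (s - τ) ≤ w s * sig γ τ s / nu γ s := by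
      rw [hh']
      exact (div_le_div_iff_of_pos_right hν).2 (mul_le_mul_of_nonneg_right hwle hσ.le)
    have hrle : h (s - τ) ^ p ≤ (w s * sig γ τ s / nu γ s) ^ p :=
      Real.rpow_le_rpow (hh0 _ (by linarith)) hble hp0
    have hexp : (w s * sig γ τ s / nu γ s) ^ p
        = w s ^ p * sig γ τ s ^ p / nu γ s ^ p := by
      rw [Real.div_rpow (mul_nonneg (hwpos s hs.le).le hσ.le) hν.le,
        Real.mul_rpow (hwpos s hs.le).le hσ.le]
    have hν1p : nu γ s ^ (1 - p) = nu γ s / nu γ s ^ p := by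
      rw [Real.rpow_sub hν, Real.rpow_one]
    calc W s = α s * nu γ s * h (s - τ) ^ p := rfl
      _ ≤ α s * nu γ s * (w s ^ p * sig γ τ s ^ p / nu γ s ^ p) := by
          exact mul_le_mul_of_nonneg_left (hrle.trans_eq hexp)
            (mul_nonneg (hα s) hν.le)
      _ = β s * w s ^ p := by
          simp only [hβdef]
          rw [hν1p]
          field_simp
  -- continuity and positivity of β
  have hβc : Continuous β := by
    rw [hβdef]
    apply Continuous.mul
    · exact hαc.mul (hrpow_c.comp (continuous_sig hγc τ))
    · apply continuous_iff_continuousAt.2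
      intro x
      exact (continuous_nu hγc).continuousAt.rpow_const (Or.inl (nu_pos γ x).ne')
  have hβnn : ∀ ξ, 0 ≤ β ξ := by
    intro ξ
    have h1 := (Real.rpow_pos_of_pos (sig_pos γ τ ξ) p).le
    have h2 := (Real.rpow_pos_of_pos (nu_pos γ ξ) (1 - p)).le
    exact mul_nonneg (mul_nonneg (hα ξ) h1) h2
  have hJd : ∀ s : ℝ, HasDerivAt (fun r => ∫ ξ in τ..r, β ξ) (β s) s := fun s =>
    intervalIntegral.integral_hasDerivAt_right (hβc.intervalIntegrable _ _)
      hβc.aestronglyMeasurable.stronglyMeasurableAtFilter hβc.continuousAt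
  -- main conclusion
  intro t htt
  have ht0 : (0:ℝ) ≤ t := le_trans hτ0 htt
  set F : ℝ → ℝ := fun s => w s ^ (1 - p) + (p - 1) * ∫ ξ in τ..s, β ξ with hFdef
  have hFmono : MonotoneOn F (Icc τ t) := by
    apply monotoneOn_of_deriv_nonneg (convex_Icc τ t)
    · apply ContinuousOn.add
      · apply ContinuousOn.rpow_const
          ((hwcont.mono (fun x hx => le_trans hτ0 hx.1)).mono (fun x hx => hx))
        intro x hx
        exact Or.inl (hwpos x hx.1).ne'
      · exact (continuous_const.mul
          (continuous_iff_continuousAt.2 fun s => (hJd s).continuousAt)).continuousOn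
    · intro x hx
      rw [interior_Icc] at hx
      have hx0 : 0 < x := lt_trans hτ hx.1
      have hda := (hwd x hx0.le).hasDerivAt (Ici_mem_nhds hx0)
      have := (hda.rpow_const (p := 1 - p) (Or.inl (hwpos x hx.1.le).ne')).add (HasDerivAt.const_mul (p - 1) (hJd x))
      exact this.differentiableAt.differentiableWithinAt
    · intro x hx
      rw [interior_Icc] at hx
      have hx0 : 0 < x := lt_trans hτ hx.1
      have hwx : 0 < w x := hwpos x hx.1.le
      have hda := (hwd x hx0.le).hasDerivAt (Ici_mem_nhds hx0)
      have hF' := (hda.rpow_const (p := 1 - p) (Or.inl hwx.ne')).add (HasDerivAt.const_mul (p - 1) (hJd x))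
      rw [show deriv F x = W x * (1 - p) * w x ^ (1 - p - 1) + (p - 1) * β x from hF'.deriv]
      have hkk := hwkey x hx.1
      have hr : w x ^ (1 - p - 1) * w x ^ p = 1 := by
        rw [← Real.rpow_add hwx]; norm_num
      have hrpos : 0 < w x ^ (1 - p - 1) := Real.rpow_pos_of_pos hwx _
      have hWx : 0 ≤ W x := hWnn x hx0.le
      have h2 : w x ^ (1 - p - 1) * W x ≤ β x := by
        calc w x ^ (1 - p - 1) * W x ≤ w x ^ (1 - p - 1) * (β x * w x ^ p) :=
              mul_le_mul_of_nonneg_left hkk hrpos.le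
          _ = (w x ^ (1 - p - 1) * w x ^ p) * β x := by ring
          _ = β x := by rw [hr, one_mul]
      nlinarith [mul_le_mul_of_nonneg_left h2 (by linarith : (0:ℝ) ≤ p - 1)]
  have hτm : τ ∈ Icc τ t := ⟨le_rfl, htt⟩
  have htm : t ∈ Icc τ t := ⟨htt, le_rfl⟩
  have hFle : F τ ≤ F t := hFmono hτm htm htt
  have hFτ : F τ = (hτv * nu γ τ) ^ (1 - p) := by
    rw [hFdef]
    simp [intervalIntegral.integral_same, hwτ]
  have hFt : F t = w t ^ (1 - p) + (p - 1) * ∫ ξ in τ..t, β ξ := rfl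
  set Jt : ℝ := ∫ ξ in τ..t, β ξ with hJt
  have hD : (hτv * nu γ τ) ^ (1 - p) - (p - 1) * Jt ≤ w t ^ (1 - p) := by
    rw [hFτ] at hFle
    rw [hFt] at hFle
    linarith
  have hJle : Jt ≤ I := by
    rw [hJt, intervalIntegral.integral_of_le htt, hI, hβdef]
    apply setIntegral_mono_set hint
    · exact Filter.Eventually.of_forall fun x => hβnn x
    · exact HasSubset.Subset.eventuallyLE (fun x hx => hx.1.le)
  have hDpos : 0 < (hτv * nu γ τ) ^ (1 - p) - (p - 1) * Jt := by
    have h1 : (p - 1) * Jt ≤ (p - 1) * I :=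
      mul_le_mul_of_nonneg_left hJle (by linarith)
    linarith
  have hwt : 0 < w t := hwpos t htt
  have hfin : w t ≤ ((hτv * nu γ τ) ^ (1 - p) - (p - 1) * Jt) ^ (-(1 / (p - 1))) := by
    have h1 : (w t ^ (1 - p)) ^ (-(1 / (p - 1))) = w t := by
      rw [← Real.rpow_mul hwt.le]
      have hne : p - 1 ≠ 0 := by intro h0; rw [sub_eq_zero] at h0; linarith
      rw [show (1 - p) * (-(1 / (p - 1))) = 1 by field_simp; ring]
      exact Real.rpow_one _
    calc w t = (w t ^ (1 - p)) ^ (-(1 / (p - 1))) := h1.symm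
      _ ≤ ((hτv * nu γ τ) ^ (1 - p) - (p - 1) * Jt) ^ (-(1 / (p - 1))) := by
          apply Real.rpow_le_rpow_of_nonpos hDpos hD
          have h2 : (0:ℝ) < 1 / (p - 1) := by
            apply one_div_pos.2; linarith
          linarith
  have hcompt : n t ≤ h t := comp t (by linarith)
  have hht : h t = w t / nu γ t := by
    simp only [hwdef]
    rw [mul_comm, mul_div_assoc, div_self (nu_pos γ t).ne', mul_one]
  calc ‖u t‖ ≤ h t := hcompt
    _ = w t / nu γ t := hht
    _ ≤ ((hτv * nu γ τ) ^ (1 - p) - (p - 1) * Jt) ^ (-(1 / (p - 1))) / nu γ t := by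
        exact (div_le_div_iff_of_pos_right (nu_pos γ t)).2 hfin
    _ = (1 / nu γ t) * ((hτv * nu γ τ) ^ (1 - p) - (p - 1) * Jt) ^ (-(1 / (p - 1))) := by
        ring
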